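/- For a symmetric bilinear form B on a 2-dimensional inner product space V with values in an inner product space W, with H = (1/2)·trace_g(B), the condition ⟨−|H|²g + H·B, B⟩ = 0 (as an element of W paired with all normal vectors, i.e. ∑_{i,j}(−|H|²g(e_i,e_j) + ⟨H,B(e_i,e_j)⟩)B(e_i,e_j) = 0) implies H·B = |H|²g, i.e. ⟨H, B(X,Y)⟩ = |H|²⟨X,Y⟩ for all X,Y. -/
import Mathlib


open scoped RealInnerProductSpace

/-- for a symmetric `W`-valued bilinear form `B` on a 2-dimensional inner
product space with `H = (1/2) trace B`, the vanishing of
`∑ᵢⱼ (⟪H,B(eᵢ,eⱼ)⟫ − |H|² δᵢⱼ) • B(eᵢ,eⱼ)` implies `⟪H, B(X,Y)⟫ = |H|² ⟪X,Y⟫`. -/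
theorem stmt_1 {V W : Type*}
    [NormedAddCommGroup V] [InnerProductSpace ℝ V]
    [NormedAddCommGroup W] [InnerProductSpace ℝ W]
    (b : OrthonormalBasis (Fin 2) ℝ V)
    (B : V →ₗ[ℝ] V →ₗ[ℝ] W) (hBsymm : ∀ X Y : V, B X Y = B Y X)
    (H : W) (hH : H = (1 / 2 : ℝ) • (B (b 0) (b 0) + B (b 1) (b 1)))
    (hcontr : ∑ i : Fin 2, ∑ j : Fin 2,
        (⟪H, B (b i) (b j)⟫ - ‖H‖ ^ 2 * (if i = j then (1 : ℝ) else 0)) • B (b i) (b j)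
          = 0) :
    ∀ X Y : V, ⟪H, B X Y⟫ = ‖H‖ ^ 2 * ⟪X, Y⟫ := by
  set a := B (b 0) (b 0) with ha
  set c := B (b 1) (b 1) with hc
  set d := B (b 0) (b 1) with hd
  have hd' : B (b 1) (b 0) = d := (hBsymm (b 1) (b 0)).trans rfl
  have htr : ⟪H, a⟫ + ⟪H, c⟫ = 2 * ‖H‖ ^ 2 := by
    have hs : ‖H‖ ^ 2 = ⟪H, H⟫ := (real_inner_self_eq_norm_sq H).symm
    rw [hs]
    nth_rewrite 4 [hH]
    rw [real_inner_smul_right, inner_add_right]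
    ring
  have hin : ⟪H, ∑ i : Fin 2, ∑ j : Fin 2,
        (⟪H, B (b i) (b j)⟫ - ‖H‖ ^ 2 * (if i = j then (1 : ℝ) else 0)) • B (b i) (b j)⟫
        = (0 : ℝ) := by rw [hcontr, inner_zero_right]
  simp only [Fin.sum_univ_two, inner_add_right, real_inner_smul_right, hd',
    ← ha, ← hc, ← hd] at hin
  norm_num at hin
  have h1 : ⟪H, a⟫ = ‖H‖ ^ 2 := by
    nlinarith [sq_nonneg (⟪H, a⟫ - ‖H‖ ^ 2), sq_nonneg ⟪H, d⟫, htr, hin]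
  have h2 : ⟪H, c⟫ = ‖H‖ ^ 2 := by linarith
  rw [h1, h2] at hin
  have h3 : ⟪H, d⟫ = 0 := by
    have hdd : ⟪H, d⟫ * ⟪H, d⟫ = 0 := by linarith
    exact mul_self_eq_zero.mp hdd
  intro X Y
  have hX := b.sum_repr X
  have hY := b.sum_repr Y
  rw [← hX, ← hY]
  have h00 : ⟪b 0, b 0⟫ = (1:ℝ) := by rw [real_inner_self_eq_norm_sq, b.orthonormal.1 0]; norm_num
  have h11 : ⟪b 1, b 1⟫ = (1:ℝ) := by rw [real_inner_self_eq_norm_sq, b.orthonormal.1 1]; norm_num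
  have h01 : ⟪b 0, b 1⟫ = (0:ℝ) := b.orthonormal.2 (by norm_num)
  have h10 : ⟪b 1, b 0⟫ = (0:ℝ) := b.orthonormal.2 (by norm_num)
  simp only [Fin.sum_univ_two, map_add, map_smul, LinearMap.add_apply, LinearMap.smul_apply,
    inner_add_right, real_inner_smul_right, inner_add_left, real_inner_smul_left, hd',
    ← ha, ← hc, ← hd, h00, h11, h01, h10, h1, h2, h3]
  ring
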